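/- Let $c > 0$, $z \in (0,1)$, and $x$ real with $0 < x < (1-z)^2$. Then $\sum_{k\geq 1} z^k\, {}_2F_1\!\left(\frac{k}{2}, \frac{k+1}{2}; c; x\right) = \frac{z}{1-z}\, {}_2F_1\!\left(\frac{1}{2}, 1; c; \frac{x}{(1-z)^2}\right)$, with all series converging absolutely. -/

import Mathlib

open Real

noncomputable def poch (a : ℝ) (n : ℕ) : ℝ := (ascPochhammer ℝ n).eval a

/-- The Gauss hypergeometric series `₂F₁(a,b;c;x)`. -/
noncomputable def hyp2F1 (a b c x : ℝ) : ℝ :=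
  ∑' n : ℕ, poch a n * poch b n / (poch c n * (n.factorial : ℝ)) * x ^ n

lemma poch_zero (a : ℝ) : poch a 0 = 1 := by simp [poch]

lemma poch_succ (a : ℝ) (n : ℕ) : poch a (n + 1) = poch a n * (a + n) :=
  ascPochhammer_succ_eval n a

lemma poch_pos {a : ℝ} (ha : 0 < a) (n : ℕ) : 0 < poch a n := by
  induction n with
  | zero => simp [poch_zero]
  | succ n ih => rw [poch_succ]; positivity

lemma poch_one (n : ℕ) : poch 1 n = n.factorial := by
  induction n with
  | zero => simp [poch_zero]
  | succ n ih => rw [poch_succ, ih]; push_cast [Nat.factorial_succ]; ring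

lemma poch_nat (k n : ℕ) : poch ((k : ℝ) + 1) n = (k + n).factorial / k.factorial := by
  induction n with
  | zero => simp [poch_zero, (Nat.factorial_pos k).ne']
  | succ n ih =>
      rw [poch_succ, ih]
      have : ((k + (n+1)).factorial : ℝ) = (k + n).factorial * ((k : ℝ) + 1 + n) := by
        have : k + (n + 1) = (k + n) + 1 := by omega
        rw [this, Nat.factorial_succ]; push_cast; ring
      rw [this]; ring

lemma poch_dup (a : ℝ) (n : ℕ) :
    poch a n * poch (a + 1/2) n = poch (2 * a) (2 * n) / 4 ^ n := by
  induction n with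
  | zero => simp [poch_zero]
  | succ n ih =>
      have h2 : 2 * (n + 1) = (2 * n) + 1 + 1 := by omega
      rw [poch_succ, poch_succ, h2, poch_succ, poch_succ]
      push_cast
      rw [show poch a n * (a + n) * (poch (a + 1/2) n * (a + 1/2 + n))
            = (poch a n * poch (a + 1/2) n) * ((a + n) * (a + 1/2 + n)) by ring, ih]
      field_simp
      ring

lemma poch_half (n : ℕ) : poch (1/2) n = (2 * n).factorial / (4 ^ n * n.factorial) := by
  have h := poch_dup (1/2) n
  rw [show (1:ℝ)/2 + 1/2 = 1 by norm_num, poch_one, show 2 * (1/2 : ℝ) = 1 by norm_num] at h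
  have h2 : poch (1:ℝ) (2*n) = ((2*n).factorial : ℝ) := poch_one (2*n)
  rw [h2] at h
  have hn : (n.factorial : ℝ) ≠ 0 := Nat.cast_ne_zero.mpr n.factorial_ne_zero
  field_simp at h ⊢
  linarith [h]

noncomputable def Tfun (c u : ℝ) (n : ℕ) : ℝ :=
  poch (1/2) n * poch 1 n / (poch c n * (n.factorial : ℝ)) * u ^ n

lemma hfac (n : ℕ) : ((n.factorial : ℝ)) ≠ 0 := Nat.cast_ne_zero.mpr n.factorial_ne_zero

lemma Tfun_pos {c u : ℝ} (hc : 0 < c) (hu0 : 0 < u) (n : ℕ) : 0 < Tfun c u n := by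
  have h1 := poch_pos (by norm_num : (0:ℝ) < 1/2) n
  have h2 := poch_pos one_pos n
  have h3 := poch_pos hc n
  have h4 : (0:ℝ) < (n.factorial : ℝ) := by exact_mod_cast n.factorial_pos
  have h5 : 0 < u ^ n := pow_pos hu0 n
  unfold Tfun; positivity

lemma Tfun_summable {c u : ℝ} (hc : 0 < c) (hu0 : 0 < u) (hu1 : u < 1) :
    Summable (Tfun c u) := by
  apply summable_of_ratio_test_tendsto_lt_one hu1
      (Filter.Eventually.of_forall fun n => (Tfun_pos hc hu0 n).ne')
  have hTrec : ∀ n : ℕ, Tfun c u (n + 1)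
      = Tfun c u n * (u * (((n : ℝ) + 1/2) / ((n : ℝ) + c))) := by
    intro n
    unfold Tfun
    rw [poch_succ, poch_succ, poch_succ, pow_succ, Nat.factorial_succ]
    have hcn' : ((n : ℝ) + c) ≠ 0 := by positivity
    have hn1 : ((n : ℝ) + 1) ≠ 0 := by positivity
    have hpc : poch c n ≠ 0 := (poch_pos hc n).ne'
    push_cast
    field_simp
    ring
  have hratio : ∀ n : ℕ, ‖Tfun c u (n + 1)‖ / ‖Tfun c u n‖
      = u * (((n : ℝ) + 1/2) / ((n : ℝ) + c)) := by
    intro n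
    rw [Real.norm_eq_abs, Real.norm_eq_abs, abs_of_pos (Tfun_pos hc hu0 _),
      abs_of_pos (Tfun_pos hc hu0 _), hTrec n, mul_div_cancel_left₀ _ (Tfun_pos hc hu0 n).ne']
  have htend : Filter.Tendsto (fun n : ℕ => u * (((n : ℝ) + 1/2) / ((n : ℝ) + c)))
      Filter.atTop (nhds u) := by
    have h1 : Filter.Tendsto (fun n : ℕ => ((n : ℝ) + c)) Filter.atTop Filter.atTop :=
      Filter.tendsto_atTop_add_const_right _ c tendsto_natCast_atTop_atTop
    have h2 : Filter.Tendsto (fun n : ℕ => ((1:ℝ)/2 - c) / ((n : ℝ) + c))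
        Filter.atTop (nhds 0) := Filter.Tendsto.const_div_atTop h1 _
    have h3 : Filter.Tendsto (fun n : ℕ => 1 + ((1:ℝ)/2 - c) / ((n : ℝ) + c))
        Filter.atTop (nhds 1) := by simpa using tendsto_const_nhds.add h2
    have h4 : (fun n : ℕ => 1 + ((1:ℝ)/2 - c) / ((n : ℝ) + c))
        = fun n : ℕ => ((n : ℝ) + 1/2) / ((n : ℝ) + c) := by
      funext n
      have : ((n : ℝ) + c) ≠ 0 := by positivity
      field_simp
      ring
    rw [h4] at h3
    simpa using tendsto_const_nhds.mul h3
  exact htend.congr fun n => (hratio n).symm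

lemma hdup (k n : ℕ) : poch (((k : ℝ) + 1) / 2) n * poch (((k : ℝ) + 2) / 2) n
    = ((k + 2 * n).factorial : ℝ) / (k.factorial * 4 ^ n) := by
  have h := poch_dup (((k : ℝ) + 1) / 2) n
  rw [show ((k : ℝ) + 1) / 2 + 1/2 = ((k : ℝ) + 2) / 2 by ring,
      show 2 * (((k : ℝ) + 1) / 2) = (k : ℝ) + 1 by ring] at h
  rw [h, poch_nat k (2 * n), div_div]

lemma row_hasSum {c z x : ℝ} (hc : 0 < c) (hz0 : 0 < z) (hz1 : z < 1) (n : ℕ) :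
    HasSum (fun k : ℕ => z ^ (k + 1) *
      (poch (((k : ℝ) + 1) / 2) n * poch (((k : ℝ) + 2) / 2) n /
        (poch c n * (n.factorial : ℝ)) * x ^ n))
      (z / (1 - z) * Tfun c (x / (1 - z) ^ 2) n) := by
  have h1z : (0:ℝ) < 1 - z := by linarith
  have hznorm : ‖z‖ < 1 := by rw [Real.norm_eq_abs, abs_lt]; constructor <;> linarith
  have hgeom : HasSum (fun k : ℕ => (((k + 2 * n).choose (2 * n) : ℕ) : ℝ) * z ^ k)
      (1 / (1 - z) ^ (2 * n + 1)) :=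
    hasSum_choose_mul_geometric_of_norm_lt_one (2 * n) hznorm
  have h2 := hgeom.mul_left
    (z * ((2 * n).factorial : ℝ) * x ^ n / (4 ^ n * poch c n * (n.factorial : ℝ)))
  convert h2 using 1
  · rfl
  · funext k
    rw [hdup k n]
    have hch : (((k + 2 * n).choose (2 * n) : ℕ) : ℝ)
        = ((k + 2 * n).factorial : ℝ) / (((2 * n).factorial : ℝ) * (k.factorial : ℝ)) := by
      rw [Nat.cast_choose ℝ (Nat.le_add_left (2 * n) k), Nat.add_sub_cancel]
    rw [hch]
    have h4 : (4:ℝ) ^ n ≠ 0 := by positivity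
    have hpc : poch c n ≠ 0 := (poch_pos hc n).ne'
    field_simp
    ring_nf
  · unfold Tfun
    rw [poch_half, poch_one, div_pow, ← pow_mul]
    have h4 : (4:ℝ) ^ n ≠ 0 := by positivity
    have h1zp : ((1 - z) : ℝ) ≠ 0 := h1z.ne'
    have hpc : poch c n ≠ 0 := (poch_pos hc n).ne'
    have h1zp2 : ((1 - z) : ℝ) ^ (2 * n) ≠ 0 := pow_ne_zero _ h1zp
    rw [pow_succ]
    field_simp

/-- Letac's sum: for `c > 0`, `0 < z < 1`, `0 < x < (1-z)²`,
`∑_{k≥1} z^k ₂F₁(k/2,(k+1)/2;c;x) = z/(1-z) ₂F₁(1/2,1;c;x/(1-z)²)`. -/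
theorem letac_sum (c z x : ℝ) (hc : 0 < c) (hz0 : 0 < z) (hz1 : z < 1)
    (hx0 : 0 < x) (hx1 : x < (1 - z) ^ 2) :
    (∀ k : ℕ, Summable fun n : ℕ =>
        poch (((k : ℝ) + 1) / 2) n * poch (((k : ℝ) + 2) / 2) n /
          (poch c n * (n.factorial : ℝ)) * x ^ n) ∧
    (Summable fun k : ℕ =>
        z ^ (k + 1) * hyp2F1 (((k : ℝ) + 1) / 2) (((k : ℝ) + 2) / 2) c x) ∧
    (∑' k : ℕ, z ^ (k + 1) * hyp2F1 (((k : ℝ) + 1) / 2) (((k : ℝ) + 2) / 2) c x) =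
      z / (1 - z) * hyp2F1 (1 / 2) 1 c (x / (1 - z) ^ 2) := by
  have h1z : (0:ℝ) < 1 - z := by linarith
  have hu0 : 0 < x / (1 - z) ^ 2 := div_pos hx0 (by positivity)
  have hu1 : x / (1 - z) ^ 2 < 1 := (div_lt_one (by positivity)).mpr hx1
  -- the double-indexed family, in (n, k) order
  set F : ℕ × ℕ → ℝ := fun p => z ^ (p.2 + 1) *
      (poch (((p.2 : ℝ) + 1) / 2) p.1 * poch (((p.2 : ℝ) + 2) / 2) p.1 /
        (poch c p.1 * (p.1.factorial : ℝ)) * x ^ p.1) with hF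
  have hFnonneg : 0 ≤ F := by
    intro p
    have h1 := (poch_pos (by positivity : (0:ℝ) < ((p.2 : ℝ) + 1) / 2) p.1).le
    have h2 := (poch_pos (by positivity : (0:ℝ) < ((p.2 : ℝ) + 2) / 2) p.1).le
    have h3 := (poch_pos hc p.1).le
    have h4 : (0:ℝ) ≤ (p.1.factorial : ℝ) := by positivity
    have h5 : (0:ℝ) ≤ x ^ p.1 := by positivity
    have h6 : (0:ℝ) ≤ z ^ (p.2 + 1) := by positivity
    exact mul_nonneg h6 (mul_nonneg (div_nonneg (mul_nonneg h1 h2) (mul_nonneg h3 h4)) h5)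
  have hFsum : Summable F := by
    rw [summable_prod_of_nonneg hFnonneg]
    constructor
    · exact fun n => (row_hasSum hc hz0 hz1 n).summable
    · apply Summable.congr ((Tfun_summable hc hu0 hu1).mul_left (z / (1 - z)))
      intro n
      exact ((row_hasSum hc hz0 hz1 n).tsum_eq).symm
  set G : ℕ × ℕ → ℝ := fun p => z ^ (p.1 + 1) *
      (poch (((p.1 : ℝ) + 1) / 2) p.2 * poch (((p.1 : ℝ) + 2) / 2) p.2 /
        (poch c p.2 * (p.2.factorial : ℝ)) * x ^ p.2) with hG
  have hGsum : Summable G := by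
    have : F = G ∘ (Equiv.prodComm ℕ ℕ) := rfl
    exact ((Equiv.prodComm ℕ ℕ).summable_iff).mp (this ▸ hFsum)
  have hGnonneg : 0 ≤ G := fun p => hFnonneg (p.2, p.1)
  have hz' : ∀ k : ℕ, (z : ℝ) ^ (k + 1) ≠ 0 := fun k => pow_ne_zero _ hz0.ne'
  -- goal 1
  have goal1 : ∀ k : ℕ, Summable fun n : ℕ =>
      poch (((k : ℝ) + 1) / 2) n * poch (((k : ℝ) + 2) / 2) n /
        (poch c n * (n.factorial : ℝ)) * x ^ n := by
    intro k
    have h1 : Summable fun n => G (k, n) :=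
      hGsum.comp_injective (Prod.mk_right_injective (a := k))
    apply (h1.mul_left ((z ^ (k + 1))⁻¹)).congr
    intro n
    show (z ^ (k + 1))⁻¹ * (z ^ (k + 1) * _) = _
    rw [← mul_assoc, inv_mul_cancel₀ (hz' k), one_mul]
  -- hyp2F1 as tsum of G-rows
  have hhyp : ∀ k : ℕ, z ^ (k + 1) * hyp2F1 (((k : ℝ) + 1) / 2) (((k : ℝ) + 2) / 2) c x
      = ∑' n : ℕ, G (k, n) := by
    intro k
    rw [hyp2F1, ← tsum_mul_left]
  have hGit := (summable_prod_of_nonneg hGnonneg).mp hGsum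
  refine ⟨goal1, ?_, ?_⟩
  · exact hGit.2.congr fun k => (hhyp k).symm
  · calc (∑' k : ℕ, z ^ (k + 1) * hyp2F1 (((k : ℝ) + 1) / 2) (((k : ℝ) + 2) / 2) c x)
        = ∑' k : ℕ, ∑' n : ℕ, G (k, n) := by
          exact tsum_congr hhyp
      _ = ∑' p : ℕ × ℕ, G p := (Summable.tsum_prod hGsum).symm
      _ = ∑' p : ℕ × ℕ, F p := ((Equiv.prodComm ℕ ℕ).tsum_eq G).symm
      _ = ∑' n : ℕ, ∑' k : ℕ, F (n, k) := Summable.tsum_prod hFsum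
      _ = ∑' n : ℕ, z / (1 - z) * Tfun c (x / (1 - z) ^ 2) n :=
          tsum_congr fun n => (row_hasSum hc hz0 hz1 n).tsum_eq
      _ = z / (1 - z) * ∑' n : ℕ, Tfun c (x / (1 - z) ^ 2) n := tsum_mul_left
      _ = z / (1 - z) * hyp2F1 (1 / 2) 1 c (x / (1 - z) ^ 2) := rfl
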